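/- Let λ ∈ (1/2, 1) be such that 1/λ is a Garsia number. Then there exists C > 0 such that for any n and any two distinct words a, a' ∈ {0,1}^n, the periodic points satisfy |π_λ(a^∞) − π_λ(a'^∞)| ≥ C/2^n, where π_λ(a^∞) = (∑_{i=1}^n a_i λ^{i−1})/(1 − λ^n). -/

import Mathlib

open Polynomial IntermediateField

set_option maxHeartbeats 1000000 in
lemma garsia_aux (β : ℝ) (hβ1 : 1 < β)
    (hint : IsIntegral ℤ β)
    (hnorm : |(minpoly ℤ β).coeff 0| = 2)
    (hconj : ∀ z : ℂ, Polynomial.aeval z (minpoly ℤ β) = 0 → 1 < ‖z‖) :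
    ∃ D > (0 : ℝ), ∀ n : ℕ, ∀ Q : Polynomial ℤ, Q ≠ 0 → Q.natDegree < n →
      (∀ k, Q.coeff k = -1 ∨ Q.coeff k = 0 ∨ Q.coeff k = 1) →
      D * (β / 2) ^ n ≤ |Polynomial.aeval β Q| := by
  classical
  have hβ0 : (0:ℝ) < β := lt_trans one_pos hβ1
  have hintQ : IsIntegral ℚ β := hint.tower_top
  haveI : FiniteDimensional ℚ ℚ⟮β⟯ := adjoin.finiteDimensional hintQ
  set gen : ℚ⟮β⟯ := AdjoinSimple.gen ℚ β with hgen
  have hgenmap : algebraMap ℚ⟮β⟯ ℝ gen = β := AdjoinSimple.algebraMap_gen ℚ β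
  have hminQ : minpoly ℚ β = (minpoly ℤ β).map (algebraMap ℤ ℚ) :=
    minpoly.isIntegrallyClosed_eq_field_fractions ℚ ℝ hint
  have hroot : ∀ σ : ℚ⟮β⟯ →ₐ[ℚ] ℂ, Polynomial.aeval (σ gen) (minpoly ℤ β) = 0 := by
    intro σ
    have h1 : Polynomial.aeval (σ gen) (minpoly ℚ gen) = 0 := by
      rw [Polynomial.aeval_algHom_apply, minpoly.aeval, map_zero]
    rw [show minpoly ℚ gen = minpoly ℚ β from minpoly_gen (F := ℚ) β, hminQ, Polynomial.aeval_map_algebraMap] at h1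
    exact h1
  set r : (ℚ⟮β⟯ →ₐ[ℚ] ℂ) → ℝ := fun σ => ‖σ gen‖ with hr
  have hr1 : ∀ σ, 1 < r σ := fun σ => hconj _ (hroot σ)
  set σ₀ : ℚ⟮β⟯ →ₐ[ℚ] ℂ := (Complex.ofRealAm.restrictScalars ℚ).comp (IntermediateField.val _) with hσ₀
  have hσ₀x : ∀ x : ℚ⟮β⟯, σ₀ x = ((algebraMap ℚ⟮β⟯ ℝ x : ℝ) : ℂ) := fun x => rfl
  have hrσ₀ : r σ₀ = β := by
    rw [hr]; simp only [hσ₀x, hgenmap, Complex.norm_real, Real.norm_eq_abs]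
    exact abs_of_pos hβ0
  have hnormgen : |(Algebra.norm ℚ gen : ℚ)| = 2 := by
    have h := Algebra.PowerBasis.norm_gen_eq_coeff_zero_minpoly (adjoin.powerBasis hintQ)
    rw [adjoin.powerBasis_gen] at h
    rw [show Algebra.norm ℚ gen = (-1) ^ (adjoin.powerBasis hintQ).dim * (minpoly ℚ gen).coeff 0 from h, abs_mul, abs_pow, abs_neg, abs_one, one_pow, one_mul, show minpoly ℚ gen = minpoly ℚ β from minpoly_gen (F := ℚ) β, hminQ, coeff_map]
    rw [show (algebraMap ℤ ℚ) ((minpoly ℤ β).coeff 0) = (((minpoly ℤ β).coeff 0 : ℤ) : ℚ) from rfl]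
    rw [← Int.cast_abs, hnorm]; norm_num
  have hprod2 : ∏ σ : ℚ⟮β⟯ →ₐ[ℚ] ℂ, r σ = 2 := by
    have h := Algebra.norm_eq_prod_embeddings ℚ ℂ gen
    have h2 := congrArg norm h
    rw [norm_prod] at h2
    rw [hr, ← h2]
    rw [show (algebraMap ℚ ℂ) (Algebra.norm ℚ gen) = (((Algebra.norm ℚ gen : ℚ) : ℝ) : ℂ) by norm_cast]
    rw [Complex.norm_real, Real.norm_eq_abs, ← Rat.cast_abs, hnormgen]; norm_num
  have hrσ₀mem : σ₀ ∈ (Finset.univ : Finset (ℚ⟮β⟯ →ₐ[ℚ] ℂ)) := Finset.mem_univ _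
  have hprodrest : ∏ σ ∈ Finset.univ.erase σ₀, r σ = 2 / β := by
    have h := Finset.mul_prod_erase Finset.univ r hrσ₀mem
    rw [hprod2, hrσ₀] at h
    rw [eq_div_iff hβ0.ne']
    linarith
  refine ⟨∏ σ ∈ Finset.univ.erase σ₀, (r σ - 1),
    Finset.prod_pos (fun σ _ => sub_pos.mpr (hr1 σ)), ?_⟩
  set D : ℝ := ∏ σ ∈ Finset.univ.erase σ₀, (r σ - 1) with hD
  have hDpos : 0 < D := Finset.prod_pos (fun σ _ => sub_pos.mpr (hr1 σ))
  intro n Q hQ0 hdeg hcoef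
  -- nonvanishing
  have hc0 : (minpoly ℤ β).coeff 0 ≠ 0 := by
    intro h; rw [h] at hnorm; simp at hnorm
  have haQ : Polynomial.aeval β Q ≠ 0 := by
    intro h0
    obtain ⟨Rp, hRp⟩ := minpoly.isIntegrallyClosed_dvd hint h0
    have htp : (minpoly ℤ β).trailingCoeff = (minpoly ℤ β).coeff 0 := by
      rw [Polynomial.trailingCoeff, Polynomial.natTrailingDegree_eq_zero.mpr (Or.inr hc0)]
    have hQtr : Q.trailingCoeff = (minpoly ℤ β).trailingCoeff * Rp.trailingCoeff := by
      rw [hRp, Polynomial.trailingCoeff_mul]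
    have hQtrne : Q.trailingCoeff ≠ 0 := fun h => hQ0 (Polynomial.trailingCoeff_eq_zero.mp h)
    have h1 : |Q.trailingCoeff| ≤ 1 := by
      rcases hcoef Q.natTrailingDegree with h|h|h <;> simp [Polynomial.trailingCoeff, h]
    have hRtr : Rp.trailingCoeff ≠ 0 := by
      rintro h; rw [h, mul_zero] at hQtr; exact hQtrne hQtr
    have h2 : (2:ℤ) ≤ |Q.trailingCoeff| := by
      rw [hQtr, abs_mul, htp, hnorm]
      nlinarith [Int.one_le_abs hRtr]
    omega
  -- the element of the field
  set x : ℚ⟮β⟯ := Polynomial.aeval gen Q with hx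
  have hmapx : algebraMap ℚ⟮β⟯ ℝ x = Polynomial.aeval β Q := by
    rw [hx, ← Polynomial.aeval_algebraMap_apply, hgenmap]
  have hxne : x ≠ 0 := by
    intro h; apply haQ; rw [← hmapx, h, map_zero]
  have hgenint : IsIntegral ℤ gen :=
    (isIntegral_algebraMap_iff (algebraMap ℚ⟮β⟯ ℝ).injective).mp (by rw [hgenmap]; exact hint)
  have hxint : IsIntegral ℤ x := by
    exact IsIntegral.of_mem_of_fg _ hgenint.fg_adjoin_singleton _
      (Polynomial.aeval_mem_adjoin_singleton ℤ gen)
  have hnormint : IsIntegral ℤ (Algebra.norm ℚ x) := Algebra.isIntegral_norm ℚ hxint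
  obtain ⟨m, hm⟩ := IsIntegrallyClosed.isIntegral_iff.mp hnormint
  have hnormne : Algebra.norm ℚ x ≠ 0 := Algebra.norm_ne_zero_iff.mpr hxne
  have hmne : m ≠ 0 := by
    rintro rfl
    apply hnormne
    rw [← hm, map_zero]
  have h1m : (1:ℝ) ≤ |(m:ℝ)| := by exact_mod_cast Int.one_le_abs hmne
  -- bound for each embedding
  have hbound : ∀ σ : ℚ⟮β⟯ →ₐ[ℚ] ℂ, ‖σ x‖ ≤ (r σ)^n / (r σ - 1) := by
    intro σ
    have hσx : σ x = Polynomial.aeval (σ gen) Q :=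
      (Polynomial.aeval_algHom_apply (σ.restrictScalars ℤ) gen Q).symm
    have hrpos : 0 < r σ - 1 := sub_pos.mpr (hr1 σ)
    rw [hσx, Polynomial.aeval_eq_sum_range' hdeg]
    calc ‖∑ i ∈ Finset.range n, Q.coeff i • (σ gen)^i‖
        ≤ ∑ i ∈ Finset.range n, ‖Q.coeff i • (σ gen)^i‖ :=
          norm_sum_le _ _
      _ ≤ ∑ i ∈ Finset.range n, (r σ)^i := by
          apply Finset.sum_le_sum; intro i _
          rw [zsmul_eq_mul, norm_mul, norm_pow]
          have h1 : ‖((Q.coeff i : ℤ) : ℂ)‖ ≤ 1 := by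
            rcases hcoef i with h|h|h <;> simp [h]
          calc ‖((Q.coeff i : ℤ):ℂ)‖ * ‖σ gen‖^i
              ≤ 1 * (r σ)^i := by
                apply mul_le_mul h1 (le_refl _) (by positivity) zero_le_one
            _ = (r σ)^i := one_mul _
      _ = ((r σ)^n - 1)/(r σ - 1) := geom_sum_eq (ne_of_gt (hr1 σ)) n
      _ ≤ (r σ)^n / (r σ - 1) := by
          have := hr1 σ
          gcongr
          linarith
  have hprodsplit : ∏ σ : ℚ⟮β⟯ →ₐ[ℚ] ℂ, ‖σ x‖
      = ‖σ₀ x‖ * ∏ σ ∈ Finset.univ.erase σ₀, ‖σ x‖ :=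
    (Finset.mul_prod_erase Finset.univ _ hrσ₀mem).symm
  have habs₀ : ‖σ₀ x‖ = |Polynomial.aeval β Q| := by
    rw [hσ₀x, hmapx, Complex.norm_real, Real.norm_eq_abs]
  have hge1 : (1:ℝ) ≤ ∏ σ : ℚ⟮β⟯ →ₐ[ℚ] ℂ, ‖σ x‖ := by
    have hE := Algebra.norm_eq_prod_embeddings ℚ ℂ x
    have h2 := congrArg norm hE
    rw [norm_prod] at h2
    rw [← h2, ← hm]
    rw [show (algebraMap ℚ ℂ) ((algebraMap ℤ ℚ) m) = ((m:ℝ):ℂ) by norm_cast]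
    rw [Complex.norm_real, Real.norm_eq_abs]; exact h1m
  have hrestbound : ∏ σ ∈ Finset.univ.erase σ₀, ‖σ x‖ ≤ (2/β)^n * D⁻¹ := by
    calc ∏ σ ∈ Finset.univ.erase σ₀, ‖σ x‖
        ≤ ∏ σ ∈ Finset.univ.erase σ₀, ((r σ)^n / (r σ - 1)) :=
          Finset.prod_le_prod (fun σ _ => norm_nonneg _) (fun σ _ => hbound σ)
      _ = (∏ σ ∈ Finset.univ.erase σ₀, (r σ))^n / D := by
          rw [Finset.prod_div_distrib, Finset.prod_pow, hD]
      _ = (2/β)^n * D⁻¹ := by rw [hprodrest, div_eq_mul_inv]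
  have hcpos : 0 < (2/β)^n * D⁻¹ := by positivity
  have h1 : (1:ℝ) ≤ |Polynomial.aeval β Q| * ((2/β)^n * D⁻¹) := by
    calc (1:ℝ) ≤ ∏ σ : ℚ⟮β⟯ →ₐ[ℚ] ℂ, ‖σ x‖ := hge1
      _ = |Polynomial.aeval β Q| * ∏ σ ∈ Finset.univ.erase σ₀, ‖σ x‖ := by
          rw [hprodsplit, habs₀]
      _ ≤ |Polynomial.aeval β Q| * ((2/β)^n * D⁻¹) :=
          mul_le_mul_of_nonneg_left hrestbound (abs_nonneg _)
  have h2 : 1 / ((2/β)^n * D⁻¹) ≤ |Polynomial.aeval β Q| := (div_le_iff₀ hcpos).mpr (by linarith)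
  have heq : D * (β/2)^n = 1 / ((2/β)^n * D⁻¹) := by
    rw [div_pow, div_pow, one_div, mul_inv, inv_inv, inv_div]
    ring
  rw [heq]; exact h2

set_option maxHeartbeats 1000000 in
/-- Separation of the periodic points `π_λ(a^∞) = (∑_{i=1}^n a_i λ^{i-1})/(1-λ^n)` when
`1/λ` is a Garsia number. -/
theorem stmt_8 (lam : ℝ) (hlam : lam ∈ Set.Ioo (1 / 2 : ℝ) 1)
    (hint : IsIntegral ℤ (1 / lam))
    (hnorm : |(minpoly ℤ (1 / lam)).coeff 0| = 2)
    (hconj : ∀ z : ℂ, Polynomial.aeval z (minpoly ℤ (1 / lam)) = 0 → 1 < ‖z‖) :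
    ∃ C > (0 : ℝ), ∀ n : ℕ, ∀ a a' : Fin n → ℝ,
      (∀ i, a i = 0 ∨ a i = 1) → (∀ i, a' i = 0 ∨ a' i = 1) → a ≠ a' →
      C / 2 ^ n ≤
        |(∑ i : Fin n, a i * lam ^ (i : ℕ)) / (1 - lam ^ n)
          - (∑ i : Fin n, a' i * lam ^ (i : ℕ)) / (1 - lam ^ n)| := by
  obtain ⟨hl2, hl1⟩ := hlam
  have hl0 : (0:ℝ) < lam := by linarith
  have hβ1 : 1 < 1/lam := by rw [lt_div_iff₀ hl0]; linarith
  obtain ⟨D, hD, hkey⟩ := garsia_aux (1/lam) hβ1 hint hnorm hconj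
  refine ⟨D * (1/lam), by positivity, ?_⟩
  intro n a a' ha ha' hne
  rcases Nat.eq_zero_or_pos n with rfl | hn
  · exact absurd (_root_.funext fun i : Fin 0 => i.elim0) hne
  obtain ⟨m, rfl⟩ : ∃ m, n = m + 1 := ⟨n-1, by omega⟩
  classical
  set e : Fin (m+1) → ℤ := fun i => (if a i = 1 then 1 else 0) - (if a' i = 1 then 1 else 0) with he
  have hecast : ∀ i, (e i : ℝ) = a i - a' i := by
    intro i; rcases ha i with h|h <;> rcases ha' i with h'|h' <;> norm_num [he, h, h']
  have herange : ∀ i, e i = -1 ∨ e i = 0 ∨ e i = 1 := by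
    intro i; rcases ha i with h|h <;> rcases ha' i with h'|h' <;> norm_num [he, h, h']
  set Q : Polynomial ℤ := ∑ i : Fin (m+1), Polynomial.C (e i) * Polynomial.X ^ ((i.rev : Fin (m+1)) : ℕ) with hQ
  have hvalrev : ∀ i : Fin (m+1), ((i.rev : Fin (m+1)) : ℕ) = m - (i:ℕ) := by
    intro i; rw [Fin.val_rev]; omega
  have hcoeffQ : ∀ i : Fin (m+1), Q.coeff (i : ℕ) = e i.rev := by
    intro i
    rw [hQ, Polynomial.finset_sum_coeff]
    rw [Finset.sum_eq_single i.rev]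
    · simp [Polynomial.coeff_C_mul, Polynomial.coeff_X_pow, Fin.rev_rev]
    · intro j _ hj
      rw [Polynomial.coeff_C_mul, Polynomial.coeff_X_pow, if_neg, mul_zero]
      intro hji
      exact hj (by rw [← Fin.rev_rev j, Fin.ext hji.symm])
    · intro h; exact absurd (Finset.mem_univ _) h
  have hcoeff0 : ∀ k, m+1 ≤ k → Q.coeff k = 0 := by
    intro k hk
    rw [hQ, Polynomial.finset_sum_coeff]
    apply Finset.sum_eq_zero
    intro j _
    rw [Polynomial.coeff_C_mul, Polynomial.coeff_X_pow, if_neg, mul_zero]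
    have := (j.rev).isLt
    omega
  have hcr : ∀ k, Q.coeff k = -1 ∨ Q.coeff k = 0 ∨ Q.coeff k = 1 := by
    intro k
    by_cases hk : k < m+1
    · have h := hcoeffQ ⟨k, hk⟩
      rw [show ((⟨k,hk⟩ : Fin (m+1)):ℕ) = k from rfl] at h
      rw [h]; exact herange _
    · exact Or.inr (Or.inl (hcoeff0 k (le_of_not_gt hk)))
  have hQne : Q ≠ 0 := by
    obtain ⟨i, hi⟩ := Function.ne_iff.mp hne
    have hei : e i ≠ 0 := by
      intro h
      have := hecast i
      rw [h] at this
      push_cast at this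
      apply hi; linarith
    intro h
    have h2 := hcoeffQ i.rev
    rw [h, Polynomial.coeff_zero, Fin.rev_rev] at h2
    exact hei h2.symm
  have hdeg : Q.natDegree < m+1 := by
    rw [Polynomial.natDegree_lt_iff_degree_lt hQne]
    exact (Polynomial.degree_lt_iff_coeff_zero Q (m+1)).mpr
      (fun k hk => hcoeff0 k (by exact_mod_cast hk))
  have hb := hkey (m+1) Q hQne hdeg hcr
  -- evaluation identity
  have hsum : (∑ i : Fin (m+1), a i * lam ^ (i:ℕ)) - (∑ i : Fin (m+1), a' i * lam ^ (i:ℕ))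
      = lam ^ m * Polynomial.aeval (1/lam : ℝ) Q := by
    rw [← Finset.sum_sub_distrib, hQ, map_sum, Finset.mul_sum]
    apply Finset.sum_congr rfl
    intro i _
    rw [map_mul, map_pow, Polynomial.aeval_C, Polynomial.aeval_X, hvalrev i]
    rw [show (algebraMap ℤ ℝ) (e i) = ((e i : ℤ) : ℝ) from rfl, hecast i]
    have hile : (i:ℕ) ≤ m := by have := i.isLt; omega
    have hmsplit : m = (i:ℕ) + (m - (i:ℕ)) := by omega
    rw [div_pow, one_pow]
    rw [show lam ^ m = lam ^ (i:ℕ) * lam ^ (m - (i:ℕ)) by rw [← pow_add, ← hmsplit]]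
    have hlne : lam ^ (m - (i:ℕ)) ≠ 0 := pow_ne_zero _ hl0.ne'
    field_simp
  -- final estimates
  have hlamn : 0 < 1 - lam ^ (m+1) := by
    have h := pow_lt_one₀ hl0.le hl1 (by omega : m+1 ≠ 0)
    linarith
  have hlamn1 : 1 - lam ^ (m+1) ≤ 1 := by
    have := pow_pos hl0 (m+1); linarith
  rw [div_sub_div_same, abs_div, abs_of_pos hlamn, hsum, abs_mul,
    abs_of_pos (pow_pos hl0 m)]
  have hstep : D * (1/lam) / 2 ^ (m+1) ≤ lam ^ m * |Polynomial.aeval (1/lam : ℝ) Q| := by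
    have h3 : lam ^ m * (D * ((1/lam)/2) ^ (m+1)) = D * (1/lam) / 2 ^ (m+1) := by
      rw [div_pow, div_pow, one_pow, pow_succ]
      have : lam ^ m ≠ 0 := pow_ne_zero _ hl0.ne'
      field_simp
    calc D * (1/lam) / 2 ^ (m+1) = lam ^ m * (D * ((1/lam)/2) ^ (m+1)) := h3.symm
      _ ≤ lam ^ m * |Polynomial.aeval (1/lam : ℝ) Q| :=
          mul_le_mul_of_nonneg_left hb (pow_pos hl0 m).le
  calc D * (1/lam) / 2 ^ (m+1) ≤ lam ^ m * |Polynomial.aeval (1/lam : ℝ) Q| := hstep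
    _ ≤ lam ^ m * |Polynomial.aeval (1/lam : ℝ) Q| / (1 - lam ^ (m+1)) := by
        rw [le_div_iff₀ hlamn]
        have hnn : 0 ≤ lam ^ m * |Polynomial.aeval (1/lam : ℝ) Q| :=
          mul_nonneg (pow_pos hl0 m).le (abs_nonneg _)
        nlinarith
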